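/- There exists an absolute constant C > 0 such that the following holds. For every d ≥ 2, M ≥ 1, T ≥ 1, δ ∈ (0,1), and all fixed vectors g_{t,n} ∈ ℝ^d for t = 0,…,T−1 and n = 1,…,M: let ḡ_t = (1/M)·Σ_{n=1}^M g_{t,n} and Δ_{t,n} = g_{t,n} − ḡ_t, and suppose (1/M)·Σ_{n=1}^M ‖Δ_{t,n}‖₂² ≤ σ_t² and max_{1≤n≤M} ‖Δ_{t,n}‖₂ ≤ B_t for each t. If the vectors v_{t,n} are i.i.d. normalized Rademacher vectors in ℝ^d (independent across both t and n), then with probability at least 1 − δ, simultaneously for all t = 0,…,T−1: ‖(d/M)·Σ_{n=1}^M (v_{t,n}ᵀ g_{t,n})·v_{t,n} − ḡ_t‖₂ ≤ C·√((d−1)·log(2dT/δ)/M)·(‖ḡ_t‖₂ + σ_t) + C·((d−1)·log(2dT/δ)/M)·(‖ḡ_t‖₂ + B_t). -/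

import Mathlib

open Finset MeasureTheory

open scoped RealInnerProductSpace

noncomputable section

def rad (b : Bool) : ℝ := if b then 1 else -1

lemma rad_sq (b : Bool) : rad b * rad b = 1 := by cases b <;> simp [rad]

lemma rad_beq (x y : Bool) : rad (x == y) = rad x * rad y := by
  cases x <;> cases y <;> simp [rad]

lemma chernoff_one {κ : Type*} [Fintype κ] [DecidableEq κ] (a : κ → ℝ) (τ : ℝ) (hτ : 0 ≤ τ)
    (hV : 0 < ∑ k, a k ^ 2) :
    ((univ.filter fun x : κ → Bool => τ ≤ ∑ k, a k * rad (x k)).card : ℝ)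
      ≤ Real.exp (-τ ^ 2 / (2 * ∑ k, a k ^ 2)) * 2 ^ Fintype.card κ := by
  classical
  set V := ∑ k, a k ^ 2 with hVdef
  set lam := τ / V with hlam
  have hlam0 : 0 ≤ lam := div_nonneg hτ hV.le
  set S : (κ → Bool) → ℝ := fun x => ∑ k, a k * rad (x k) with hS
  have step1 : ((univ.filter fun x : κ → Bool => τ ≤ S x).card : ℝ) * Real.exp (lam * τ)
      ≤ ∑ x : κ → Bool, Real.exp (lam * S x) := by
    have h1 : ((univ.filter fun x : κ → Bool => τ ≤ S x).card : ℝ) * Real.exp (lam * τ)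
        = ∑ x ∈ univ.filter (fun x : κ → Bool => τ ≤ S x), Real.exp (lam * τ) := by
      rw [Finset.sum_const, nsmul_eq_mul]
    rw [h1]
    refine le_trans (Finset.sum_le_sum ?_) (Finset.sum_le_sum_of_subset_of_nonneg
      (Finset.filter_subset _ _) (fun _ _ _ => (Real.exp_pos _).le))
    intro x hx
    rw [Finset.mem_filter] at hx
    exact Real.exp_le_exp.2 (mul_le_mul_of_nonneg_left hx.2 hlam0)
  have step2 : ∑ x : κ → Bool, Real.exp (lam * S x)
      = ∏ k, (Real.exp (lam * a k) + Real.exp (-(lam * a k))) := by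
    have h0 : ∀ x : κ → Bool, Real.exp (lam * S x) = ∏ k, Real.exp (lam * a k * rad (x k)) := by
      intro x
      rw [← Real.exp_sum, hS, Finset.mul_sum]
      ring_nf
    simp_rw [h0]
    have h2 := Finset.prod_univ_sum (fun _ : κ => (univ : Finset Bool))
      (fun k b => Real.exp (lam * a k * rad b))
    rw [Fintype.piFinset_univ] at h2
    rw [← h2]
    refine Finset.prod_congr rfl fun k _ => ?_
    simp [rad]
  have step3 : ∏ k, (Real.exp (lam * a k) + Real.exp (-(lam * a k)))
      ≤ (2 : ℝ) ^ Fintype.card κ * Real.exp (lam ^ 2 * V / 2) := by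
    have h1 : ∀ k, Real.exp (lam * a k) + Real.exp (-(lam * a k))
        ≤ 2 * Real.exp ((lam * a k) ^ 2 / 2) := by
      intro k
      have := Real.cosh_le_exp_half_sq (lam * a k)
      rw [Real.cosh_eq] at this
      linarith
    calc ∏ k, (Real.exp (lam * a k) + Real.exp (-(lam * a k)))
        ≤ ∏ k, 2 * Real.exp ((lam * a k) ^ 2 / 2) := by
          refine Finset.prod_le_prod (fun k _ => by positivity) (fun k _ => h1 k)
      _ = (2 : ℝ) ^ Fintype.card κ * Real.exp (lam ^ 2 * V / 2) := by
          rw [Finset.prod_mul_distrib, Finset.prod_const, ← Real.exp_sum, Finset.card_univ]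
          have harg : ∑ x : κ, (lam * a x) ^ 2 / 2 = lam ^ 2 * V / 2 := by
            rw [hVdef, Finset.mul_sum, Finset.sum_div]
            exact Finset.sum_congr rfl fun k _ => by ring
          rw [harg]
  have hVne : V ≠ 0 := ne_of_gt hV
  have hexp : lam ^ 2 * V / 2 - lam * τ = -τ ^ 2 / (2 * V) := by
    rw [hlam]; field_simp; ring
  have H : ((univ.filter fun x : κ → Bool => τ ≤ S x).card : ℝ) * Real.exp (lam * τ)
      ≤ 2 ^ Fintype.card κ * Real.exp (lam ^ 2 * V / 2) := step1.trans (step2.le.trans step3)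
  have H2 : ((univ.filter fun x : κ → Bool => τ ≤ S x).card : ℝ)
      ≤ 2 ^ Fintype.card κ * Real.exp (lam ^ 2 * V / 2) / Real.exp (lam * τ) :=
    (le_div_iff₀ (Real.exp_pos _)).2 H
  calc ((univ.filter fun x : κ → Bool => τ ≤ S x).card : ℝ)
      ≤ 2 ^ Fintype.card κ * Real.exp (lam ^ 2 * V / 2) / Real.exp (lam * τ) := H2
    _ = Real.exp (lam ^ 2 * V / 2 - lam * τ) * 2 ^ Fintype.card κ := by
        rw [Real.exp_sub]; ring
    _ = Real.exp (-τ ^ 2 / (2 * V)) * 2 ^ Fintype.card κ := by rw [hexp]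

lemma chernoff_abs {Ω : Type*} {κ : Type*} [Fintype Ω] [Fintype κ] [DecidableEq κ]
    (e : Ω ≃ (κ → Bool)) (a : κ → ℝ) (τ : ℝ) (hτ : 0 ≤ τ) (hV : 0 < ∑ k, a k ^ 2) :
    ((univ.filter fun ω : Ω => τ ≤ |∑ k, a k * rad (e ω k)|).card : ℝ)
      ≤ 2 * Real.exp (-τ ^ 2 / (2 * ∑ k, a k ^ 2)) * Fintype.card Ω := by
  classical
  have hcard : (univ.filter fun ω : Ω => τ ≤ |∑ k, a k * rad (e ω k)|).card
      = (univ.filter fun x : κ → Bool => τ ≤ |∑ k, a k * rad (x k)|).card :=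
    Finset.card_equiv e (by simp)
  have hΩ : (Fintype.card Ω : ℝ) = 2 ^ Fintype.card κ := by
    rw [Fintype.card_congr e]
    simp
  have hsubset : (univ.filter fun x : κ → Bool => τ ≤ |∑ k, a k * rad (x k)|)
      ⊆ (univ.filter fun x : κ → Bool => τ ≤ ∑ k, a k * rad (x k))
        ∪ (univ.filter fun x : κ → Bool => τ ≤ ∑ k, (fun k => -a k) k * rad (x k)) := by
    intro x hx
    simp only [Finset.mem_filter, Finset.mem_union, Finset.mem_univ, true_and] at hx ⊢
    rcases abs_cases (∑ k, a k * rad (x k)) with ⟨h, _⟩ | ⟨h, _⟩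
    · left; linarith [hx]
    · right
      have : ∑ k, -a k * rad (x k) = -∑ k, a k * rad (x k) := by
        rw [← Finset.sum_neg_distrib]
        exact Finset.sum_congr rfl fun k _ => by ring
      rw [this]; linarith [hx]
  have hVneg : 0 < ∑ k, (-a k) ^ 2 := by simpa using hV
  have h1 := chernoff_one a τ hτ hV
  have h2 := chernoff_one (fun k => -a k) τ hτ hVneg
  have hVeq : ∑ k, (-a k) ^ 2 = ∑ k, a k ^ 2 := by
    exact Finset.sum_congr rfl fun k _ => by ring
  rw [hVeq] at h2
  have hle := Finset.card_le_card hsubset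
  have hle2 := Finset.card_union_le
    (univ.filter fun x : κ → Bool => τ ≤ ∑ k, a k * rad (x k))
    (univ.filter fun x : κ → Bool => τ ≤ ∑ k, (fun k => -a k) k * rad (x k))
  rw [hcard, hΩ]
  push_cast
  have := hle.trans hle2
  calc ((univ.filter fun x : κ → Bool => τ ≤ |∑ k, a k * rad (x k)|).card : ℝ)
      ≤ ((univ.filter fun x : κ → Bool => τ ≤ ∑ k, a k * rad (x k)).card : ℝ)
        + ((univ.filter fun x : κ → Bool => τ ≤ ∑ k, (fun k => -a k) k * rad (x k)).card : ℝ) := by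
        exact_mod_cast this
    _ ≤ Real.exp (-τ ^ 2 / (2 * ∑ k, a k ^ 2)) * 2 ^ Fintype.card κ
        + Real.exp (-τ ^ 2 / (2 * ∑ k, a k ^ 2)) * 2 ^ Fintype.card κ := add_le_add h1 h2
    _ = 2 * Real.exp (-τ ^ 2 / (2 * ∑ k, a k ^ 2)) * 2 ^ Fintype.card κ := by ring

lemma uniform_meas_le {Ω : Type*} [Fintype Ω] [Nonempty Ω] [MeasurableSpace Ω]
    [MeasurableSingletonClass Ω] (P : Ω → Prop) [DecidablePred P] {c : ℝ} (hc : 0 ≤ c)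
    (h : ((univ.filter P).card : ℝ) ≤ c * Fintype.card Ω) :
    (PMF.uniformOfFintype Ω).toMeasure {ω | P ω} ≤ ENNReal.ofReal c := by
  rw [PMF.toMeasure_apply_fintype]
  have hind : ∀ x : Ω, ({ω | P ω}).indicator (PMF.uniformOfFintype Ω) x
      = if P x then (Fintype.card Ω : ENNReal)⁻¹ else 0 := by
    intro x; by_cases hx : P x <;> simp [Set.indicator, hx, PMF.uniformOfFintype_apply]
  simp_rw [hind]
  rw [← Finset.sum_filter, Finset.sum_const, nsmul_eq_mul, ← div_eq_mul_inv]
  rw [ENNReal.div_le_iff (by simp [Fintype.card_pos.ne']) (by simp)]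
  calc ((univ.filter P).card : ENNReal) = ENNReal.ofReal ((univ.filter P).card : ℝ) := by
        simp
    _ ≤ ENNReal.ofReal (c * Fintype.card Ω) := ENNReal.ofReal_le_ofReal h
    _ = ENNReal.ofReal c * (Fintype.card Ω : ENNReal) := by
        rw [ENNReal.ofReal_mul hc]; simp

abbrev Omega (T M d : ℕ) := Fin T → Fin M → Fin d → Bool
abbrev Kappa (T M d : ℕ) := Fin T × Fin M × Fin d

lemma euclid_sum_apply {α : Type*} {d : ℕ} (s : Finset α) (f : α → EuclideanSpace ℝ (Fin d))
    (i : Fin d) : (∑ n ∈ s, f n) i = ∑ n ∈ s, f n i := by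
  classical
  induction s using Finset.induction with
  | empty => rfl
  | insert _ _ hx ih =>
    rw [Finset.sum_insert hx, Finset.sum_insert hx, PiLp.add_apply, ih]

lemma sum_ite_ne {d : ℕ} (i : Fin d) (F : Fin d → ℝ) :
    ∑ j, (if j ≠ i then F j else 0) = (∑ j, F j) - F i := by
  rw [← Finset.sum_filter, Finset.filter_ne', Finset.sum_erase_eq_sub (mem_univ i)]

set_option maxHeartbeats 2000000 in
/-- Uniform (over `T` rounds) high-probability bound for the scalar-projection error:
there is an absolute constant `C > 0` such that for i.i.d. normalized Rademacher
directions `v_{t,n}` in `ℝ^d` (independent across rounds `t` and agents `n`) and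
fixed vectors `g_{t,n}` with per-round bounded heterogeneity, with probability at
least `1 - δ`, simultaneously for all rounds `t`,
`‖(d/M) Σₙ (v_{t,n}ᵀ g_{t,n}) v_{t,n} - ḡ_t‖₂
  ≤ C√((d-1)log(2dT/δ)/M)(‖ḡ_t‖+σ_t) + C((d-1)log(2dT/δ)/M)(‖ḡ_t‖+B_t)`. -/
theorem scalar_projection_error_uniform_high_probability :
    ∃ C > (0 : ℝ), ∀ (d M T : ℕ), 2 ≤ d → 1 ≤ M → 1 ≤ T → ∀ δ : ℝ, 0 < δ → δ < 1 →
      ∀ (g : Fin T → Fin M → EuclideanSpace ℝ (Fin d))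
        (gbar : Fin T → EuclideanSpace ℝ (Fin d)),
      (∀ t, gbar t = (M : ℝ)⁻¹ • ∑ n, g t n) →
      ∀ σ B : Fin T → ℝ, (∀ t, 0 ≤ σ t) → (∀ t, 0 ≤ B t) →
      (∀ t, (M : ℝ)⁻¹ * ∑ n, ‖g t n - gbar t‖ ^ 2 ≤ σ t ^ 2) →
      (∀ t n, ‖g t n - gbar t‖ ≤ B t) →
      ∀ v : (Fin T → Fin M → Fin d → Bool) → Fin T → Fin M → EuclideanSpace ℝ (Fin d),
      (∀ ω t n i, v ω t n i = (Real.sqrt d)⁻¹ * (if ω t n i then 1 else -1)) →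
      ENNReal.ofReal (1 - δ) ≤
        (PMF.uniformOfFintype (Fin T → Fin M → Fin d → Bool)).toMeasure
          {ω | ∀ t, ‖((d : ℝ) / M) • ∑ n, ⟪v ω t n, g t n⟫ • v ω t n - gbar t‖
            ≤ C * Real.sqrt (((d : ℝ) - 1) * Real.log (2 * d * T / δ) / M)
                * (‖gbar t‖ + σ t)
              + C * (((d : ℝ) - 1) * Real.log (2 * d * T / δ) / M)
                * (‖gbar t‖ + B t)} := by
  classical
  refine ⟨4, by norm_num, ?_⟩
  intro d M T hd hM hT δ hδ0 hδ1 g gbar hgbar σ B hσ hB hσbound hBbound v hv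
  have hd0 : (0:ℝ) < d := by exact_mod_cast lt_of_lt_of_le (by norm_num) hd
  have hM0 : (0:ℝ) < M := by exact_mod_cast hM
  have hT0 : (0:ℝ) < T := by exact_mod_cast hT
  set L := Real.log (2 * d * T / δ) with hLdef
  have hratio1 : (1:ℝ) < 2 * d * T / δ := by
    rw [lt_div_iff₀ hδ0]
    have h2 : (2:ℝ) ≤ (d:ℝ) := by exact_mod_cast hd
    have h3 : (1:ℝ) ≤ (T:ℝ) := by exact_mod_cast hT
    nlinarith
  have hL : 0 < L := Real.log_pos hratio1
  set Vc : Fin T → ℝ := fun t => ∑ n, ∑ j, (g t n j) ^ 2 with hVcdef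
  have hVc0 : ∀ t, 0 ≤ Vc t := fun t => by positivity
  set τ : Fin T → ℝ := fun t => Real.sqrt (2 * Vc t * L) / M with hτdef
  have hτ0 : ∀ t, 0 ≤ τ t := fun t => by positivity
  set a : Fin T → Fin d → Kappa T M d → ℝ :=
    fun t i k => if k.1 = t ∧ k.2.2 ≠ i then g t k.2.1 k.2.2 / M else 0 with hadef
  set φ : Fin T → Fin d → Omega T M d → Omega T M d :=
    fun t i ω t' n j => if t' = t ∧ j ≠ i then (ω t' n j == ω t' n i) else ω t' n j with hφdef
  have hφinv : ∀ t i, Function.Involutive (φ t i) := by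
    intro t i ω
    funext t' n j
    by_cases h : t' = t ∧ j ≠ i
    · obtain ⟨ht, hj⟩ := h
      subst ht
      simp only [hφdef]
      simp [hj]
    · simp only [hφdef]
      rw [if_neg h, if_neg h]
  set eΩ : Omega T M d ≃ (Kappa T M d → Bool) :=
    ⟨fun ω k => ω k.1 k.2.1 k.2.2, fun x t' n j => x (t', n, j), fun _ => rfl, fun _ => rfl⟩
    with heΩ
  set e' : Fin T → Fin d → Omega T M d ≃ (Kappa T M d → Bool) :=
    fun t i => ((hφinv t i).toPerm _).trans eΩ with he'
  -- the random vector and its coordinates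
  set X : Fin T → Omega T M d → EuclideanSpace ℝ (Fin d) :=
    fun t ω => ((d : ℝ) / M) • ∑ n, ⟪v ω t n, g t n⟫ • v ω t n - gbar t with hX
  have hsd : (d:ℝ) * ((Real.sqrt d)⁻¹ * (Real.sqrt d)⁻¹) = 1 := by
    rw [← mul_inv]
    rw [Real.mul_self_sqrt hd0.le]
    exact mul_inv_cancel₀ hd0.ne'
  have hvrad : ∀ (ω : Omega T M d) t n j, v ω t n j = (Real.sqrt d)⁻¹ * rad (ω t n j) := by
    intro ω t n j
    rw [hv]
    cases h : ω t n j <;> simp [rad, h]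
  have hXcoord : ∀ t i (ω : Omega T M d), X t ω i = ∑ k, a t i k * rad (e' t i ω k) := by
    intro t i ω
    have hcoe : ∀ k : Kappa T M d, e' t i ω k = φ t i ω k.1 k.2.1 k.2.2 := fun _ => rfl
    have hRHS : ∑ k, a t i k * rad (e' t i ω k)
        = ∑ n, ((∑ j, g t n j / M * (rad (ω t n j) * rad (ω t n i))) - g t n i / M) := by
      simp_rw [hcoe]
      rw [Fintype.sum_prod_type]
      rw [Finset.sum_eq_single t]
      rotate_left
      · intro t' _ ht'
        apply Finset.sum_eq_zero
        intro nj _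
        have h0 : a t i (t', nj.1, nj.2) = 0 := by
          simp [hadef, ht']
        rw [show ((t', nj.1, nj.2) : Kappa T M d) = (t', nj) from rfl] at h0
        rw [h0, zero_mul]
      · intro h; exact absurd (Finset.mem_univ t) h
      rw [Fintype.sum_prod_type]
      refine Finset.sum_congr rfl fun n _ => ?_
      have hsplit : ∀ j : Fin d, a t i (t, n, j) * rad (φ t i ω t n j)
          = if j ≠ i then g t n j / M * (rad (ω t n j) * rad (ω t n i)) else 0 := by
        intro j
        by_cases hj : j ≠ i
        · simp [hadef, hφdef, hj, rad_beq]
        · simp [hadef, hφdef, hj]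
      simp_rw [hsplit]
      rw [sum_ite_ne i (fun j => g t n j / M * (rad (ω t n j) * rad (ω t n i)))]
      rw [rad_sq, mul_one]
    rw [hRHS]
    -- now the LHS
    have hgbar_i : gbar t i = (M:ℝ)⁻¹ * ∑ n, g t n i := by
      rw [hgbar t]
      rw [PiLp.smul_apply, euclid_sum_apply, smul_eq_mul]
    have hinner : ∀ n, ⟪v ω t n, g t n⟫ = ∑ j, ((Real.sqrt d)⁻¹ * rad (ω t n j)) * g t n j := by
      intro n
      rw [PiLp.inner_apply]
      refine Finset.sum_congr rfl fun j _ => ?_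
      rw [RCLike.inner_apply, starRingEnd_apply, star_trivial, hvrad]
      ring
    have happ : X t ω i = ((d:ℝ)/M) * ∑ n, ⟪v ω t n, g t n⟫ * v ω t n i - gbar t i := by
      simp only [hX]
      rw [PiLp.sub_apply, PiLp.smul_apply, euclid_sum_apply, smul_eq_mul]
      simp_rw [PiLp.smul_apply, smul_eq_mul]
    rw [happ, hgbar_i]
    simp_rw [hinner, hvrad]
    rw [Finset.mul_sum, Finset.mul_sum, ← Finset.sum_sub_distrib]
    refine Finset.sum_congr rfl fun n _ => ?_
    rw [Finset.sum_mul, Finset.mul_sum]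
    have hperj : ∀ j, (d:ℝ)/M * ((Real.sqrt d)⁻¹ * rad (ω t n j) * g t n j
        * ((Real.sqrt d)⁻¹ * rad (ω t n i)))
        = g t n j / M * (rad (ω t n j) * rad (ω t n i)) := by
      intro j
      calc (d:ℝ)/M * ((Real.sqrt d)⁻¹ * rad (ω t n j) * g t n j
          * ((Real.sqrt d)⁻¹ * rad (ω t n i)))
          = ((d:ℝ) * ((Real.sqrt d)⁻¹ * (Real.sqrt d)⁻¹))
            * (g t n j * rad (ω t n j) * rad (ω t n i)) / M := by ring
        _ = g t n j / M * (rad (ω t n j) * rad (ω t n i)) := by rw [hsd]; ring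
    simp_rw [hperj]
    rw [inv_mul_eq_div]
  -- the bad events
  set E : Fin T → Fin d → Set (Omega T M d) :=
    fun t i => {ω : Omega T M d | τ t < |∑ k, a t i k * rad (e' t i ω k)|} with hE
  have hτsq : ∀ t, (τ t)^2 = 2 * Vc t * L / M^2 := by
    intro t
    rw [hτdef]
    rw [div_pow, Real.sq_sqrt (by positivity)]
  have hEbound : ∀ t i,
      (PMF.uniformOfFintype (Omega T M d)).toMeasure (E t i) ≤ ENNReal.ofReal (δ / (d * T)) := by
    intro t i
    have hc0 : (0:ℝ) ≤ δ / (d * T) := by positivity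
    by_cases hA : 0 < ∑ k, a t i k ^ 2
    · -- Chernoff bound case
      have hSle : ∑ k, a t i k ^ 2 ≤ Vc t / M^2 := by
        rw [Fintype.sum_prod_type]
        rw [Finset.sum_eq_single t]
        rotate_left
        · intro t' _ ht'
          apply Finset.sum_eq_zero
          intro nj _
          have h0 : a t i (t', nj.1, nj.2) = 0 := by simp [hadef, ht']
          rw [show ((t', nj.1, nj.2) : Kappa T M d) = (t', nj) from rfl] at h0
          rw [h0]
          norm_num
        · intro h; exact absurd (Finset.mem_univ t) h
        rw [Fintype.sum_prod_type]
        have hle : ∀ n : Fin M, ∑ j, a t i (t, n, j) ^ 2 ≤ ∑ j, (g t n j)^2 / M^2 := by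
          intro n
          refine Finset.sum_le_sum fun j _ => ?_
          by_cases hj : j ≠ i
          · have ha1 : a t i (t, n, j) = g t n j / M := by simp [hadef, hj]
            rw [ha1, div_pow]
          · have ha1 : a t i (t, n, j) = 0 := by simp [hadef, hj]
            calc a t i (t, n, j) ^ 2 = 0 := by rw [ha1]; norm_num
              _ ≤ g t n j ^ 2 / M ^ 2 := by positivity
        calc ∑ n, ∑ j, a t i (t, n, j) ^ 2 ≤ ∑ n, ∑ j, (g t n j)^2 / M^2 :=
              Finset.sum_le_sum fun n _ => hle n
          _ = Vc t / M^2 := by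
              rw [hVcdef, Finset.sum_div]
              exact Finset.sum_congr rfl fun n _ => by rw [Finset.sum_div]
      have hA2 : (0:ℝ) < 2 * ∑ k, a t i k ^ 2 := by linarith
      have hexp_le : -τ t ^ 2 / (2 * ∑ k, a t i k ^ 2) ≤ -L := by
        rw [neg_div, neg_le_neg_iff, le_div_iff₀ hA2, hτsq t]
        have h1 : L * (2 * ∑ k, a t i k ^ 2) ≤ L * (2 * (Vc t / M^2)) := by
          have := hSle
          nlinarith [hL.le]
        calc L * (2 * ∑ k, a t i k ^ 2) ≤ L * (2 * (Vc t / M^2)) := h1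
          _ = 2 * Vc t * L / M ^ 2 := by ring
      have key := chernoff_abs (e' t i) (a t i) (τ t) (hτ0 t) hA
      have hsub : (univ.filter fun ω : Omega T M d =>
            τ t < |∑ k, a t i k * rad (e' t i ω k)|)
          ⊆ (univ.filter fun ω : Omega T M d =>
            τ t ≤ |∑ k, a t i k * rad (e' t i ω k)|) := by
        exact fun ω hω => by simp only [Finset.mem_filter] at hω ⊢; exact ⟨hω.1, le_of_lt hω.2⟩
      have hcard : ((univ.filter fun ω : Omega T M d =>
            τ t < |∑ k, a t i k * rad (e' t i ω k)|).card : ℝ)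
          ≤ δ / (d * T) * Fintype.card (Omega T M d) := by
        have hstep : ((univ.filter fun ω : Omega T M d =>
              τ t < |∑ k, a t i k * rad (e' t i ω k)|).card : ℝ)
            ≤ ((univ.filter fun ω : Omega T M d =>
              τ t ≤ |∑ k, a t i k * rad (e' t i ω k)|).card : ℝ) := by
          exact_mod_cast Finset.card_le_card hsub
        have hexp2 : Real.exp (-τ t ^ 2 / (2 * ∑ k, a t i k ^ 2)) ≤ Real.exp (-L) :=
          Real.exp_le_exp.2 hexp_le
        have hexpL : 2 * Real.exp (-L) = δ / (d * T) := by
          rw [hLdef, Real.exp_neg, Real.exp_log (by positivity)]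
          field_simp
        calc ((univ.filter fun ω : Omega T M d =>
              τ t < |∑ k, a t i k * rad (e' t i ω k)|).card : ℝ)
            ≤ 2 * Real.exp (-τ t ^ 2 / (2 * ∑ k, a t i k ^ 2)) * Fintype.card (Omega T M d) :=
              hstep.trans key
          _ ≤ 2 * Real.exp (-L) * Fintype.card (Omega T M d) := by
              have : (0:ℝ) ≤ (Fintype.card (Omega T M d) : ℝ) := by positivity
              nlinarith
          _ = δ / (d * T) * Fintype.card (Omega T M d) := by rw [hexpL]
      have := uniform_meas_le (Ω := Omega T M d)
        (fun ω => τ t < |∑ k, a t i k * rad (e' t i ω k)|) hc0 hcard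
      exact this
    · -- degenerate case : all coefficients vanish
      have hzero : ∀ k, a t i k = 0 := by
        have hsum0 : ∑ k, a t i k ^ 2 = 0 :=
          le_antisymm (not_lt.1 hA) (by positivity)
        intro k
        have := (Finset.sum_eq_zero_iff_of_nonneg
          (fun k _ => sq_nonneg (a t i k))).1 hsum0 k (Finset.mem_univ k)
        exact (pow_eq_zero_iff two_ne_zero).1 this
      have hempty : E t i = ∅ := by
        ext ω
        simp only [hE, Set.mem_setOf_eq, Set.mem_empty_iff_false, iff_false, not_lt]
        have : ∑ k, a t i k * rad (e' t i ω k) = 0 :=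
          Finset.sum_eq_zero fun k _ => by rw [hzero k, zero_mul]
        rw [this, abs_zero]
        exact hτ0 t
      rw [hempty]
      simp
  -- the good set
  set R : Fin T → ℝ := fun t =>
    4 * Real.sqrt (((d : ℝ) - 1) * L / M) * (‖gbar t‖ + σ t)
      + 4 * (((d : ℝ) - 1) * L / M) * (‖gbar t‖ + B t) with hR
  have hnormsq : ∀ x : EuclideanSpace ℝ (Fin d), ‖x‖ ^ 2 = ∑ j, x j ^ 2 := by
    intro x
    rw [EuclideanSpace.norm_eq, Real.sq_sqrt (by positivity)]
    exact Finset.sum_congr rfl fun j _ => by rw [Real.norm_eq_abs, sq_abs]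
  have hGood : ∀ ω : Omega T M d, (∀ t i, ω ∉ E t i) → ∀ t, ‖X t ω‖ ≤ R t := by
    intro ω hω t
    have hcoordbound : ∀ i, |X t ω i| ≤ τ t := by
      intro i
      have h := hω t i
      simp only [hE, Set.mem_setOf_eq, not_lt] at h
      rw [hXcoord]
      exact h
    have hnorm : ‖X t ω‖ ≤ Real.sqrt d * τ t := by
      have hsq : ‖X t ω‖ ^ 2 ≤ (d : ℝ) * τ t ^ 2 := by
        rw [hnormsq]
        calc ∑ j, X t ω j ^ 2 ≤ ∑ j : Fin d, τ t ^ 2 := by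
              refine Finset.sum_le_sum fun j _ => ?_
              have h := hcoordbound j
              nlinarith [abs_nonneg (X t ω j), sq_abs (X t ω j)]
          _ = (d : ℝ) * τ t ^ 2 := by
              rw [Finset.sum_const, Finset.card_univ, Fintype.card_fin, nsmul_eq_mul]
      have h1 : (0:ℝ) ≤ Real.sqrt d * τ t := by positivity
      refine le_of_pow_le_pow_left₀ two_ne_zero h1 ?_
      calc ‖X t ω‖ ^ 2 ≤ (d : ℝ) * τ t ^ 2 := hsq
        _ = (Real.sqrt d * τ t) ^ 2 := by
            rw [mul_pow, Real.sq_sqrt hd0.le]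
    refine hnorm.trans ?_
    -- numeric comparison
    have hVcle : Vc t ≤ 2 * M * (‖gbar t‖ ^ 2 + σ t ^ 2) := by
      have hsum : ∀ n, ‖g t n‖ ^ 2 ≤ 2 * ‖gbar t‖ ^ 2 + 2 * ‖g t n - gbar t‖ ^ 2 := by
        intro n
        have htri : ‖g t n‖ ≤ ‖gbar t‖ + ‖g t n - gbar t‖ := by
          calc ‖g t n‖ = ‖gbar t + (g t n - gbar t)‖ := by rw [add_sub_cancel]
            _ ≤ ‖gbar t‖ + ‖g t n - gbar t‖ := norm_add_le _ _
        nlinarith [htri, norm_nonneg (g t n), norm_nonneg (gbar t), norm_nonneg (g t n - gbar t),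
          sq_nonneg (‖gbar t‖ - ‖g t n - gbar t‖),
          mul_self_le_mul_self (norm_nonneg (g t n)) htri]
      have hdelta : ∑ n, ‖g t n - gbar t‖ ^ 2 ≤ M * σ t ^ 2 := by
        have h := hσbound t
        rw [inv_mul_le_iff₀ hM0] at h
        linarith [h]
      calc Vc t = ∑ n, ‖g t n‖ ^ 2 := by
            rw [hVcdef]
            exact Finset.sum_congr rfl fun n _ => (hnormsq (g t n)).symm
        _ ≤ ∑ n, (2 * ‖gbar t‖ ^ 2 + 2 * ‖g t n - gbar t‖ ^ 2) :=
            Finset.sum_le_sum fun n _ => hsum n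
        _ = 2 * M * ‖gbar t‖ ^ 2 + 2 * ∑ n, ‖g t n - gbar t‖ ^ 2 := by
            rw [Finset.sum_add_distrib, Finset.sum_const, Finset.card_univ, Fintype.card_fin,
              nsmul_eq_mul, ← Finset.mul_sum]
            ring
        _ ≤ 2 * M * (‖gbar t‖ ^ 2 + σ t ^ 2) := by nlinarith [hdelta]
    have hd1 : (0:ℝ) ≤ (d:ℝ) - 1 := by
      have : (2:ℝ) ≤ (d:ℝ) := by exact_mod_cast hd
      linarith
    have hterm1 : Real.sqrt d * τ t
        ≤ 4 * Real.sqrt (((d : ℝ) - 1) * L / M) * (‖gbar t‖ + σ t) := by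
      have hrhs0 : (0:ℝ) ≤ 4 * Real.sqrt (((d : ℝ) - 1) * L / M) * (‖gbar t‖ + σ t) := by
        have := hσ t
        positivity
      refine le_of_pow_le_pow_left₀ two_ne_zero hrhs0 ?_
      have hlhs : (Real.sqrt d * τ t) ^ 2 = (d : ℝ) * (2 * Vc t * L) / M ^ 2 := by
        rw [mul_pow, Real.sq_sqrt hd0.le, hτsq t]
        ring
      have hrhs : (4 * Real.sqrt (((d : ℝ) - 1) * L / M) * (‖gbar t‖ + σ t)) ^ 2
          = 16 * (((d : ℝ) - 1) * L / M) * (‖gbar t‖ + σ t) ^ 2 := by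
        rw [mul_pow, mul_pow, Real.sq_sqrt (by positivity)]
        ring
      rw [hlhs, hrhs]
      rw [div_le_iff₀ (by positivity : (0:ℝ) < (M:ℝ) ^ 2)]
      have hdd1 : (d:ℝ) ≤ 2 * ((d:ℝ) - 1) := by
        have : (2:ℝ) ≤ (d:ℝ) := by exact_mod_cast hd
        linarith
      have hgs : ‖gbar t‖ ^ 2 + σ t ^ 2 ≤ (‖gbar t‖ + σ t) ^ 2 := by
        nlinarith [norm_nonneg (gbar t), hσ t]
      calc (d:ℝ) * (2 * Vc t * L)
          ≤ (d:ℝ) * (2 * (2 * M * (‖gbar t‖ ^ 2 + σ t ^ 2)) * L) := by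
            nlinarith [mul_le_mul_of_nonneg_left hVcle
              (show (0:ℝ) ≤ 2 * (d:ℝ) * L by positivity)]
        _ ≤ 16 * (((d : ℝ) - 1) * L / M) * (‖gbar t‖ + σ t) ^ 2 * M ^ 2 := by
            have heq : 16 * (((d : ℝ) - 1) * L / M) * (‖gbar t‖ + σ t) ^ 2 * (M:ℝ) ^ 2
                = 16 * (((d : ℝ) - 1) * L * M) * (‖gbar t‖ + σ t) ^ 2 := by
              field_simp
            rw [heq]
            have c0 : (0:ℝ) ≤ L * M * (‖gbar t‖ ^ 2 + σ t ^ 2) := by positivity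
            have h1 := mul_le_mul_of_nonneg_right hdd1 c0
            have c1 : (0:ℝ) ≤ 8 * ((d:ℝ) - 1) * L * M := by positivity
            have h2 := mul_le_mul_of_nonneg_left hgs c1
            nlinarith [h1, h2]
    have hterm2 : (0:ℝ) ≤ 4 * (((d : ℝ) - 1) * L / M) * (‖gbar t‖ + B t) := by
      have := hB t
      have := norm_nonneg (gbar t)
      positivity
    rw [hR]
    calc Real.sqrt d * τ t ≤ 4 * Real.sqrt (((d : ℝ) - 1) * L / M) * (‖gbar t‖ + σ t) := hterm1
      _ ≤ 4 * Real.sqrt (((d : ℝ) - 1) * L / M) * (‖gbar t‖ + σ t)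
          + 4 * (((d : ℝ) - 1) * L / M) * (‖gbar t‖ + B t) := le_add_of_nonneg_right hterm2
  -- assembling
  have hcompl : {ω : Omega T M d | ∀ t, ‖X t ω‖ ≤ R t}ᶜ ⊆ ⋃ t, ⋃ i, E t i := by
    intro ω hω
    by_contra hc
    simp only [Set.mem_iUnion, not_exists] at hc
    exact hω (hGood ω (fun t i => hc t i) )
  have hmeas_compl : (PMF.uniformOfFintype (Omega T M d)).toMeasure {ω : Omega T M d | ∀ t, ‖X t ω‖ ≤ R t}ᶜ
      ≤ ENNReal.ofReal δ := by
    calc (PMF.uniformOfFintype (Omega T M d)).toMeasure {ω : Omega T M d | ∀ t, ‖X t ω‖ ≤ R t}ᶜ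
        ≤ (PMF.uniformOfFintype (Omega T M d)).toMeasure (⋃ t, ⋃ i, E t i) := measure_mono hcompl
      _ ≤ ∑' t : Fin T, (PMF.uniformOfFintype (Omega T M d)).toMeasure (⋃ i, E t i) := measure_iUnion_le _
      _ ≤ ∑' t : Fin T, ∑' i : Fin d, (PMF.uniformOfFintype (Omega T M d)).toMeasure (E t i) :=
          ENNReal.tsum_le_tsum (fun t => measure_iUnion_le _)
      _ ≤ ∑' t : Fin T, ∑' i : Fin d, ENNReal.ofReal (δ / (d * T)) :=
          ENNReal.tsum_le_tsum (fun t => ENNReal.tsum_le_tsum (fun i => hEbound t i))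
      _ = ENNReal.ofReal δ := by
          rw [tsum_fintype]
          simp_rw [tsum_fintype]
          simp only [Finset.sum_const, Finset.card_univ, Fintype.card_fin, smul_smul]
          rw [nsmul_eq_mul]
          rw [← ENNReal.ofReal_natCast (T * d), ← ENNReal.ofReal_mul (by positivity)]
          congr 1
          push_cast
          field_simp
  have hfinal : ENNReal.ofReal (1 - δ) ≤
      (PMF.uniformOfFintype (Omega T M d)).toMeasure {ω : Omega T M d | ∀ t, ‖X t ω‖ ≤ R t} := by
    have hms : MeasurableSet {ω : Omega T M d | ∀ t, ‖X t ω‖ ≤ R t} :=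
      Set.Finite.measurableSet (Set.toFinite _)
    have hsum := measure_add_measure_compl (μ := (PMF.uniformOfFintype (Omega T M d)).toMeasure) hms
    have h1 : (PMF.uniformOfFintype (Omega T M d)).toMeasure {ω : Omega T M d | ∀ t, ‖X t ω‖ ≤ R t}
        = 1 - (PMF.uniformOfFintype (Omega T M d)).toMeasure {ω : Omega T M d | ∀ t, ‖X t ω‖ ≤ R t}ᶜ := by
      rw [MeasureTheory.prob_compl_eq_one_sub hms]
      rw [ENNReal.sub_sub_cancel ENNReal.one_ne_top prob_le_one]
    rw [h1]
    calc ENNReal.ofReal (1 - δ) = 1 - ENNReal.ofReal δ := by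
          rw [← ENNReal.ofReal_one, ← ENNReal.ofReal_sub _ hδ0.le]
      _ ≤ 1 - (PMF.uniformOfFintype (Omega T M d)).toMeasure {ω : Omega T M d | ∀ t, ‖X t ω‖ ≤ R t}ᶜ :=
          tsub_le_tsub_left hmeas_compl 1
  have hSetEq : {ω : Omega T M d | ∀ t, ‖X t ω‖ ≤ R t}
      = {ω : Omega T M d | ∀ t, ‖((d : ℝ) / M) • ∑ n, ⟪v ω t n, g t n⟫ • v ω t n - gbar t‖
            ≤ 4 * Real.sqrt (((d : ℝ) - 1) * L / M) * (‖gbar t‖ + σ t)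
              + 4 * (((d : ℝ) - 1) * L / M) * (‖gbar t‖ + B t)} := rfl
  rw [hSetEq] at hfinal
  exact hfinal
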